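/- arXiv:1910.10899 — 2 statements merged into one kernel-verified Lean document; each statement's English description precedes it below -/
import Mathlib

section
/- Let x ∈ ℓ∞ be the 0–1 sequence with x_n = 1 if 4^k ≤ n < 2·4^k for some integer k ≥ 0, and x_n = 0 otherwise. Then for every extended limit γ on ℓ∞, the Banach limit B defined by Bx = log(2) · γ( n ↦ (1/n) Σ_{k=0}^∞ x_{k+1} 2^{−k/n} ) satisfies 1/3 ≤ Bx ≤ 2/3. -/
open Filter BoundedContinuousFunction

noncomputable section

/-- `ℓ∞`: the space of bounded real sequences (indexed from `0`). -/
abbrev LInf : Type := BoundedContinuousFunction ℕ ℝ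

/-- The translation (shift) operator `T(x₁,x₂,…) = (0,x₁,x₂,…)` (0-indexed). -/
def shift (x : LInf) : LInf :=
  BoundedContinuousFunction.ofNormedAddCommGroup
    (fun n => if n = 0 then 0 else x (n - 1)) continuous_of_discreteTopology ‖x‖
    (by
      intro n
      rcases n with _ | n
      · simp [norm_nonneg x]
      · simpa using x.norm_coe_le_norm n)

/-- A Banach limit: a positive, normalised, shift-invariant continuous linear
functional on `ℓ∞`. -/
def IsBanachLimit (B : LInf →L[ℝ] ℝ) : Prop :=
  (∀ x : LInf, (∀ n, 0 ≤ x n) → 0 ≤ B x) ∧ B 1 = 1 ∧ ∀ x : LInf, B (shift x) = B x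

/-- An extended limit: a positive continuous linear functional on `ℓ∞` which agrees with
the limit on every convergent sequence. -/
def IsExtendedLimit (γ : LInf →L[ℝ] ℝ) : Prop :=
  (∀ x : LInf, (∀ n, 0 ≤ x n) → 0 ≤ γ x) ∧
    ∀ (x : LInf) (a : ℝ), Filter.Tendsto (fun n => x n) Filter.atTop (nhds a) → γ x = a

/-- The 0–1 sequence whose (1-indexed) `n`-th entry is `1` iff `4^k ≤ n < 2·4^k` for
some `k ≥ 0` (here 0-indexed: the entry at index `n` is for `n + 1`). -/
def zx : LInf :=
  BoundedContinuousFunction.ofNormedAddCommGroup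
    (Set.indicator {n : ℕ | ∃ k : ℕ, 4 ^ k ≤ n + 1 ∧ n + 1 < 2 * 4 ^ k} (fun _ => (1 : ℝ)))
    continuous_of_discreteTopology 1
    (by
      intro n
      by_cases h : n ∈ {n : ℕ | ∃ k : ℕ, 4 ^ k ≤ n + 1 ∧ n + 1 < 2 * 4 ^ k} <;>
        simp [Set.indicator, h])


namespace ZetaAux

/-- `Ψ(s) = Σ_j (s^{4^j} - s^{2·4^j})`. -/
def psi (s : ℝ) : ℝ := ∑' j : ℕ, (s ^ (4 ^ j) - s ^ (2 * 4 ^ j))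

lemma four_pow_pos (j : ℕ) : 1 ≤ 4 ^ j := Nat.one_le_pow _ _ (by norm_num)

lemma term_nonneg {s : ℝ} (h0 : 0 ≤ s) (h1 : s ≤ 1) (j : ℕ) :
    0 ≤ s ^ (4 ^ j) - s ^ (2 * 4 ^ j) := by
  have h := pow_le_pow_of_le_one h0 h1 (by nlinarith [four_pow_pos j] : 4 ^ j ≤ 2 * 4 ^ j)
  linarith

lemma psi_summable {s : ℝ} (h0 : 0 ≤ s) (h1 : s < 1) :
    Summable (fun j : ℕ => s ^ (4 ^ j) - s ^ (2 * 4 ^ j)) := by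
  refine Summable.of_nonneg_of_le (term_nonneg h0 h1.le) (fun j => ?_)
    (summable_geometric_of_lt_one h0 h1)
  have h2 : s ^ (4 ^ j) ≤ s ^ j :=
    pow_le_pow_of_le_one h0 h1.le (le_of_lt (Nat.lt_pow_self (n := j) (by norm_num)))
  have h3 : 0 ≤ s ^ (2 * 4 ^ j) := pow_nonneg h0 _
  linarith

lemma phi_hasSum {s : ℝ} (h0 : 0 ≤ s) (h1 : s < 1) :
    HasSum (fun i : ℕ => s ^ (2 ^ i) - s ^ (2 ^ (i + 1))) s := by
  have hnn : ∀ i : ℕ, 0 ≤ s ^ (2 ^ i) - s ^ (2 ^ (i + 1)) := fun i => by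
    have := pow_le_pow_of_le_one h0 h1.le
      (by have := Nat.one_le_two_pow (n := i); omega : 2 ^ i ≤ 2 ^ (i + 1))
    linarith
  have hps : ∀ n : ℕ, ∑ i ∈ Finset.range n, (s ^ (2 ^ i) - s ^ (2 ^ (i + 1)))
      = s - s ^ (2 ^ n) := by
    intro n
    have := Finset.sum_range_sub' (fun i => s ^ (2 ^ i)) n
    simpa using this
  have hsummable : Summable (fun i : ℕ => s ^ (2 ^ i) - s ^ (2 ^ (i + 1))) := by
    apply summable_of_sum_range_le hnn (c := s)
    intro n
    rw [hps]
    have : 0 ≤ s ^ (2 ^ n) := pow_nonneg h0 _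
    linarith
  rw [hasSum_iff_tendsto_nat_of_nonneg hnn]
  have htail : Tendsto (fun n : ℕ => s ^ (2 ^ n)) atTop (nhds 0) := by
    apply squeeze_zero (fun n => pow_nonneg h0 _)
      (fun n => pow_le_pow_of_le_one h0 h1.le (le_of_lt (Nat.lt_two_pow_self (n := n))))
    exact tendsto_pow_atTop_nhds_zero_of_lt_one h0 h1
  have := tendsto_const_nhds (x := s) (f := atTop (α := ℕ)) |>.sub htail
  simpa [hps] using this

lemma psi_add_psi {s : ℝ} (h0 : 0 < s) (h1 : s < 1) : psi s + psi (s ^ 2) = s := by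
  set f : ℕ → ℝ := fun i => s ^ (2 ^ i) - s ^ (2 ^ (i + 1)) with hf
  have hE : ∀ j : ℕ, s ^ (4 ^ j) - s ^ (2 * 4 ^ j) = f (2 * j) := by
    intro j
    have e1 : (2 : ℕ) ^ (2 * j) = 4 ^ j := by
      rw [pow_mul]; norm_num
    have e2 : (2 : ℕ) ^ (2 * j + 1) = 2 * 4 ^ j := by
      rw [pow_succ, e1]; ring
    simp [hf, e1, e2]
  have hO : ∀ j : ℕ, (s ^ 2) ^ (4 ^ j) - (s ^ 2) ^ (2 * 4 ^ j) = f (2 * j + 1) := by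
    intro j
    have e1 : (2 : ℕ) ^ (2 * j + 1) = 2 * 4 ^ j := by
      rw [pow_succ, pow_mul]; norm_num [Nat.mul_comm]
    have e2 : (2 : ℕ) ^ (2 * j + 1 + 1) = 2 * (2 * 4 ^ j) := by
      rw [pow_succ, e1]; ring
    simp only [hf, e1, e2, ← pow_mul]
  have hs2 : (0:ℝ) ≤ s ^ 2 := by positivity
  have hs21 : s ^ 2 < 1 := by nlinarith
  have hsume : Summable fun j : ℕ => f (2 * j) := by
    apply Summable.congr (psi_summable h0.le h1)
    exact hE
  have hsumo : Summable fun j : ℕ => f (2 * j + 1) := by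
    apply Summable.congr (psi_summable hs2 hs21)
    exact hO
  have key := tsum_even_add_odd hsume hsumo
  rw [(phi_hasSum h0.le h1).tsum_eq] at key
  have : psi s = ∑' j : ℕ, f (2 * j) := tsum_congr hE
  have h2 : psi (s ^ 2) = ∑' j : ℕ, f (2 * j + 1) := tsum_congr hO
  rw [this, h2, key]

lemma psi_sq_le {s : ℝ} (h0 : 0 < s) (h1 : s < 1) : psi (s ^ 2) ≤ 2 * psi s := by
  have hs2 : (0:ℝ) ≤ s ^ 2 := by positivity
  have hs21 : s ^ 2 < 1 := by nlinarith
  have h := Summable.tsum_le_tsum (f := fun j : ℕ => (s ^ 2) ^ (4 ^ j) - (s ^ 2) ^ (2 * 4 ^ j))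
    (g := fun j : ℕ => 2 * (s ^ (4 ^ j) - s ^ (2 * 4 ^ j))) ?_ (psi_summable hs2 hs21)
    ((psi_summable h0.le h1).mul_left 2)
  · rw [tsum_mul_left] at h
    exact h
  · intro j
    set b : ℝ := s ^ (4 ^ j) with hb
    have hb0 : 0 < b := pow_pos h0 _
    have hb1 : b ≤ 1 := pow_le_one₀ h0.le h1.le
    have e1 : (s ^ 2) ^ (4 ^ j) = b ^ 2 := by rw [hb, ← pow_mul, ← pow_mul]; ring_nf
    have e2 : (s ^ 2) ^ (2 * 4 ^ j) = b ^ 4 := by rw [hb, ← pow_mul, ← pow_mul]; ring_nf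
    have e3 : s ^ (2 * 4 ^ j) = b ^ 2 := by rw [hb, ← pow_mul]; ring_nf
    rw [e1, e2, e3]
    nlinarith [mul_nonneg (mul_nonneg hb0.le (sq_nonneg (b - 1))) (by linarith : (0:ℝ) ≤ b + 2)]

lemma psi_le {r : ℝ} (h0 : 0 < r) (h1 : r < 1) : psi r ≤ 2 / 3 * Real.sqrt r := by
  set s := Real.sqrt r with hs
  have hs0 : 0 < s := Real.sqrt_pos.2 h0
  have hsq : s ^ 2 = r := Real.sq_sqrt h0.le
  have hs1 : s < 1 := by nlinarith
  have h₁ : psi s + psi (s ^ 2) = s := psi_add_psi hs0 hs1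
  have h₂ : psi (s ^ 2) ≤ 2 * psi s := psi_sq_le hs0 hs1
  rw [hsq] at h₁ h₂
  linarith

lemma psi_ge {r : ℝ} (h0 : 0 < r) (h1 : r < 1) : r / 3 ≤ psi r := by
  have h₁ : psi r + psi (r ^ 2) = r := psi_add_psi h0 h1
  have h₂ : psi (r ^ 2) ≤ 2 / 3 * Real.sqrt (r ^ 2) := psi_le (by positivity) (by nlinarith)
  rw [Real.sqrt_sq h0.le] at h₂
  linarith

lemma zx_apply (k : ℕ) :
    zx k = Set.indicator {n : ℕ | ∃ j : ℕ, 4 ^ j ≤ n + 1 ∧ n + 1 < 2 * 4 ^ j}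
      (fun _ => (1:ℝ)) k := rfl

lemma zx_tsum {r : ℝ} (h0 : 0 < r) (h1 : r < 1) :
    ∑' k : ℕ, (zx k : ℝ) * r ^ k = psi r / (r * (1 - r)) := by
  classical
  set S := {n : ℕ | ∃ j : ℕ, 4 ^ j ≤ n + 1 ∧ n + 1 < 2 * 4 ^ j} with hS
  set f : ℕ → ℝ := fun k => zx k * r ^ k with hfdef
  set g : (Σ j : ℕ, Fin (4 ^ j)) → ℕ := fun p => 4 ^ p.1 - 1 + p.2 with hgdef
  have h4 : ∀ m : ℕ, 1 ≤ 4 ^ m := four_pow_pos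
  have key : ∀ (j j' i i' : ℕ), i < 4 ^ j → i' < 4 ^ j' → j < j' →
      4 ^ j - 1 + i ≠ 4 ^ j' - 1 + i' := by
    intro j j' i i' hi hi' hjj
    have h1' : 4 * 4 ^ j ≤ 4 ^ j' := by
      calc 4 * 4 ^ j = 4 ^ (j + 1) := (pow_succ' 4 j).symm
        _ ≤ 4 ^ j' := Nat.pow_le_pow_right (by norm_num) hjj
    have := h4 j; have := h4 j'
    omega
  have hg_inj : Function.Injective g := by
    rintro ⟨j, i⟩ ⟨j', i'⟩ h
    simp only [hgdef] at h
    have hjj : j = j' := by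
      rcases lt_trichotomy j j' with hlt | he | hgt
      · exact absurd h (key _ _ _ _ i.2 i'.2 hlt)
      · exact he
      · exact absurd h.symm (key _ _ _ _ i'.2 i.2 hgt)
    subst hjj
    have hii : (i : ℕ) = i' := by have := h4 j; omega
    exact congrArg (Sigma.mk j) (Fin.ext hii)
  have hsupp : Function.support f ⊆ Set.range g := by
    intro k hk
    have hzx : zx k ≠ 0 := by
      intro hz
      apply hk
      simp [hfdef, hz]
    have hkS : k ∈ S := by
      by_contra hns
      exact hzx (by rw [zx_apply]; exact Set.indicator_of_notMem hns _)
    obtain ⟨j, hj1, hj2⟩ := hkS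
    refine ⟨⟨j, ⟨k + 1 - 4 ^ j, by omega⟩⟩, ?_⟩
    simp only [hgdef, Fin.val_mk]
    have := h4 j
    omega
  have hval : ∀ p : (Σ j : ℕ, Fin (4 ^ j)), f (g p) = r ^ (4 ^ p.1 - 1 + (p.2 : ℕ)) := by
    rintro ⟨j, i⟩
    have hmem : (4 ^ j - 1 + (i : ℕ)) ∈ S := by
      refine ⟨j, ?_, ?_⟩ <;> (have := h4 j; have := i.2; omega)
    simp only [hfdef, hgdef]
    rw [zx_apply, Set.indicator_of_mem hmem]
    simp
  have hinner : ∀ j : ℕ, ∑' i : Fin (4 ^ j), r ^ (4 ^ j - 1 + (i : ℕ))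
      = (r ^ (4 ^ j) - r ^ (2 * 4 ^ j)) / (r * (1 - r)) := by
    intro j
    rw [tsum_fintype]
    have hsum : ∑ i : Fin (4 ^ j), r ^ (4 ^ j - 1 + (i : ℕ))
        = ∑ i ∈ Finset.range (4 ^ j), r ^ (4 ^ j - 1) * r ^ i := by
      rw [Fin.sum_univ_eq_sum_range (fun i => r ^ (4 ^ j - 1 + i))]
      exact Finset.sum_congr rfl fun i _ => by rw [pow_add]
    rw [hsum, ← Finset.mul_sum, geom_sum_eq (ne_of_lt h1)]
    have hm := h4 j
    set m := 4 ^ j with hmm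
    have e1 : r ^ m = r * r ^ (m - 1) := by
      conv_lhs => rw [show m = 1 + (m - 1) by omega]
      rw [pow_add, pow_one]
    have e2 : r ^ (2 * m) = (r * r ^ (m - 1)) * (r * r ^ (m - 1)) := by
      rw [two_mul, pow_add, ← e1]
    rw [e2, e1]
    have h1' : r - 1 ≠ 0 := by linarith
    have h1'' : (1 : ℝ) - r ≠ 0 := by linarith
    field_simp
    ring
  have hgf : (fun p : (Σ j : ℕ, Fin (4 ^ j)) => f (g p))
      = fun p => r ^ (4 ^ p.1 - 1 + (p.2 : ℕ)) := funext hval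
  have hgsum : Summable (fun p : (Σ j : ℕ, Fin (4 ^ j)) => f (g p)) := by
    rw [hgf]
    refine (summable_sigma_of_nonneg (fun p => by positivity)).2
      ⟨fun j => (hasSum_fintype _).summable, ?_⟩
    apply Summable.congr ((psi_summable h0.le h1).div_const (r * (1 - r)))
    intro j
    exact (hinner j).symm
  calc ∑' k : ℕ, f k = ∑' p : (Σ j : ℕ, Fin (4 ^ j)), f (g p) :=
        (hg_inj.tsum_eq hsupp).symm
    _ = ∑' j : ℕ, ∑' i : Fin (4 ^ j), f (g ⟨j, i⟩) := Summable.tsum_sigma hgsum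
    _ = ∑' j : ℕ, (r ^ (4 ^ j) - r ^ (2 * 4 ^ j)) / (r * (1 - r)) := by
        refine tsum_congr fun j => ?_
        rw [← hinner j]
        exact tsum_congr fun i => hval ⟨j, i⟩
    _ = psi r / (r * (1 - r)) := by
        rw [psi]
        simp only [div_eq_mul_inv]
        exact tsum_mul_right
lemma gamma_const (γ : LInf →L[ℝ] ℝ) (hγ : IsExtendedLimit γ) (c : ℝ) :
    γ (BoundedContinuousFunction.const ℕ c) = c :=
  hγ.2 _ c (by simpa using tendsto_const_nhds)

lemma gamma_ge (γ : LInf →L[ℝ] ℝ) (hγ : IsExtendedLimit γ) {x : LInf} {c : ℝ}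
    (h : ∀ n, c ≤ x n) : c ≤ γ x := by
  have h0 := hγ.1 (x - BoundedContinuousFunction.const ℕ c) (fun n => by
    simp only [BoundedContinuousFunction.coe_sub, Pi.sub_apply,
      BoundedContinuousFunction.const_apply]
    linarith [h n])
  rw [map_sub] at h0
  have hc := gamma_const γ hγ c
  linarith

lemma gamma_le (γ : LInf →L[ℝ] ℝ) (hγ : IsExtendedLimit γ) {x : LInf} {b : ℝ}
    (h : ∀ᶠ n in atTop, x n ≤ b) : γ x ≤ b := by
  have hbd : ∀ n : ℕ, ‖max (x n) b‖ ≤ ‖x‖ + |b| := by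
    intro n
    rcases le_total (x n) b with hc | hc
    · rw [max_eq_right hc, Real.norm_eq_abs]
      linarith [norm_nonneg x]
    · rw [max_eq_left hc]
      calc ‖x n‖ ≤ ‖x‖ := x.norm_coe_le_norm n
        _ ≤ ‖x‖ + |b| := by linarith [abs_nonneg b]
  set w : LInf := BoundedContinuousFunction.ofNormedAddCommGroup
    (fun n => max (x n) b) continuous_of_discreteTopology (‖x‖ + |b|) hbd with hw
  have hwapp : ∀ n, w n = max (x n) b := fun n => rfl
  have hwlim : γ w = b := by
    refine hγ.2 w b ?_
    refine Tendsto.congr' ?_ (tendsto_const_nhds (x := b))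
    filter_upwards [h] with n hn
    rw [hwapp n, max_eq_right hn]
  have hp := hγ.1 (w - x) (fun n => by
    simp only [BoundedContinuousFunction.coe_sub, Pi.sub_apply]
    rw [hwapp n]
    have := le_max_left (x n) b
    linarith)
  rw [map_sub, hwlim] at hp
  linarith

/-- `r(n) = 2^{-1/(n+1)}`. -/
def rr (n : ℕ) : ℝ := (2 : ℝ) ^ (-(1 : ℝ) / ((n : ℝ) + 1))

lemma xs_pos (n : ℕ) : 0 < Real.log 2 / ((n : ℝ) + 1) := by
  apply div_pos (Real.log_pos (by norm_num))
  positivity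

lemma rr_eq_exp (n : ℕ) : rr n = Real.exp (-(Real.log 2 / ((n : ℝ) + 1))) := by
  rw [rr, Real.rpow_def_of_pos (by norm_num)]
  congr 1
  ring

lemma rr_pos (n : ℕ) : 0 < rr n := by rw [rr_eq_exp]; exact Real.exp_pos _

lemma rr_lt_one (n : ℕ) : rr n < 1 := by
  rw [rr_eq_exp]
  calc Real.exp (-(Real.log 2 / ((n : ℝ) + 1))) < Real.exp 0 :=
        Real.exp_lt_exp.2 (by linarith [xs_pos n])
    _ = 1 := Real.exp_zero

lemma one_sub_rr_le (n : ℕ) : ((n : ℝ) + 1) * (1 - rr n) ≤ Real.log 2 := by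
  have hN : (0 : ℝ) < (n : ℝ) + 1 := by positivity
  have h := Real.add_one_le_exp (-(Real.log 2 / ((n : ℝ) + 1)))
  rw [← rr_eq_exp] at h
  have h2 : 1 - rr n ≤ Real.log 2 / ((n : ℝ) + 1) := by linarith
  calc ((n : ℝ) + 1) * (1 - rr n) ≤ ((n : ℝ) + 1) * (Real.log 2 / ((n : ℝ) + 1)) := by
        exact mul_le_mul_of_nonneg_left h2 hN.le
    _ = Real.log 2 := by field_simp

lemma xs_tendsto : Tendsto (fun n : ℕ => Real.log 2 / ((n : ℝ) + 1)) atTop (nhds 0) := by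
  have h := tendsto_one_div_add_atTop_nhds_zero_nat (𝕜 := ℝ)
  have := h.const_mul (Real.log 2)
  simpa [div_eq_mul_inv, one_div, mul_comm] using this

lemma ratio_tendsto :
    Tendsto (fun n : ℕ => (1 - Real.exp (-(Real.log 2 / ((n : ℝ) + 1)))) /
      (Real.log 2 / ((n : ℝ) + 1))) atTop (nhds 1) := by
  set xs : ℕ → ℝ := fun n => Real.log 2 / ((n : ℝ) + 1) with hxs
  have hlow : Tendsto (fun n : ℕ => 1 - xs n) atTop (nhds 1) := by
    simpa using (tendsto_const_nhds (x := (1:ℝ))).sub xs_tendsto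
  have hhigh : Tendsto (fun n : ℕ => 1 + xs n) atTop (nhds 1) := by
    simpa using (tendsto_const_nhds (x := (1:ℝ))).add xs_tendsto
  have hev : ∀ᶠ n : ℕ in atTop, xs n ≤ 1 := by
    have : ∀ᶠ n : ℕ in atTop, xs n < 1 := by
      apply xs_tendsto.eventually_lt_const (by norm_num : (0:ℝ) < 1)
    exact this.mono fun n hn => hn.le
  apply tendsto_of_tendsto_of_tendsto_of_le_of_le' hlow hhigh
  · filter_upwards [hev] with n hn
    have hx := xs_pos n
    have habs := Real.abs_exp_sub_one_sub_id_le (x := -(xs n)) (by rw [abs_neg, abs_of_pos hx]; exact hn)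
    rw [abs_le] at habs
    have h1 : xs n - xs n ^ 2 ≤ 1 - Real.exp (-(xs n)) := by
      have := habs.2
      nlinarith [sq_abs (xs n), abs_of_pos hx]
    rw [le_div_iff₀ hx]
    nlinarith
  · filter_upwards [hev] with n hn
    have hx := xs_pos n
    have habs := Real.abs_exp_sub_one_sub_id_le (x := -(xs n)) (by rw [abs_neg, abs_of_pos hx]; exact hn)
    rw [abs_le] at habs
    rw [div_le_iff₀ hx]
    nlinarith [habs.1, sq_abs (xs n), abs_of_pos hx]

lemma rho_tendsto :
    Tendsto (fun n : ℕ => ((n : ℝ) + 1) * Real.sqrt (rr n) * (1 - rr n)) atTop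
      (nhds (Real.log 2)) := by
  set xs : ℕ → ℝ := fun n => Real.log 2 / ((n : ℝ) + 1) with hxs
  have hlog : (0 : ℝ) < Real.log 2 := Real.log_pos (by norm_num)
  have heq : ∀ n : ℕ, ((n : ℝ) + 1) * Real.sqrt (rr n) * (1 - rr n)
      = Real.log 2 * (Real.sqrt (rr n) * ((1 - Real.exp (-(xs n))) / xs n)) := by
    intro n
    have hx := xs_pos n
    have hN : ((n : ℝ) + 1) = Real.log 2 / xs n := by
      rw [hxs]
      field_simp
    rw [← rr_eq_exp, hN]
    field_simp
  have h1 : Tendsto (fun n : ℕ => Real.sqrt (rr n)) atTop (nhds 1) := by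
    have hn : Tendsto (fun n : ℕ => -(xs n)) atTop (nhds 0) := by
      simpa using xs_tendsto.neg
    have := ((Real.continuous_sqrt.comp Real.continuous_exp).tendsto 0).comp hn
    simp only [Function.comp] at this
    have h2 : Tendsto (fun n : ℕ => Real.sqrt (Real.exp (-(xs n)))) atTop (nhds 1) := by
      simpa [Function.comp_def] using this
    refine h2.congr fun n => ?_
    rw [← rr_eq_exp]
  have hmain := (tendsto_const_nhds (x := Real.log 2)).mul (h1.mul ratio_tendsto)
  rw [mul_one, mul_one] at hmain
  exact hmain.congr fun n => (heq n).symm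

lemma lower_bound (n : ℕ) :
    1 / (3 * Real.log 2) ≤ ((n : ℝ) + 1)⁻¹ * (psi (rr n) / (rr n * (1 - rr n))) := by
  have hlog : (0 : ℝ) < Real.log 2 := Real.log_pos (by norm_num)
  have hr0 := rr_pos n
  have hr1 := rr_lt_one n
  have hN : (0 : ℝ) < (n : ℝ) + 1 := by positivity
  have ha : (0 : ℝ) < 1 - rr n := by linarith
  have hNa := one_sub_rr_le n
  have hpsi := psi_ge hr0 hr1
  have hd : (0 : ℝ) < rr n * (1 - rr n) := mul_pos hr0 ha
  have e1 : (rr n / 3) / (rr n * (1 - rr n)) = 1 / (3 * (1 - rr n)) := by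
    field_simp
  calc 1 / (3 * Real.log 2) ≤ 1 / (3 * (((n : ℝ) + 1) * (1 - rr n))) := by
        apply one_div_le_one_div_of_le (by positivity) (by nlinarith)
    _ = ((n : ℝ) + 1)⁻¹ * (1 / (3 * (1 - rr n))) := by
        field_simp
    _ = ((n : ℝ) + 1)⁻¹ * ((rr n / 3) / (rr n * (1 - rr n))) := by rw [e1]
    _ ≤ ((n : ℝ) + 1)⁻¹ * (psi (rr n) / (rr n * (1 - rr n))) := by
        apply mul_le_mul_of_nonneg_left ((div_le_div_iff_of_pos_right hd).2 hpsi) (by positivity)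

lemma upper_bound (n : ℕ) :
    ((n : ℝ) + 1)⁻¹ * (psi (rr n) / (rr n * (1 - rr n)))
      ≤ (2 / 3) / (((n : ℝ) + 1) * Real.sqrt (rr n) * (1 - rr n)) := by
  have hr0 := rr_pos n
  have hr1 := rr_lt_one n
  have hN : (0 : ℝ) < (n : ℝ) + 1 := by positivity
  have ha : (0 : ℝ) < 1 - rr n := by linarith
  set s := Real.sqrt (rr n) with hsdef
  have hs : (0 : ℝ) < s := Real.sqrt_pos.2 hr0
  have hsr : s * s = rr n := Real.mul_self_sqrt hr0.le
  have hpsi := psi_le hr0 hr1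
  have hd : (0 : ℝ) < rr n * (1 - rr n) := mul_pos hr0 ha
  calc ((n : ℝ) + 1)⁻¹ * (psi (rr n) / (rr n * (1 - rr n)))
      ≤ ((n : ℝ) + 1)⁻¹ * ((2 / 3 * s) / (rr n * (1 - rr n))) := by
        apply mul_le_mul_of_nonneg_left ((div_le_div_iff_of_pos_right hd).2 hpsi) (by positivity)
    _ = (2 / 3) / (((n : ℝ) + 1) * s * (1 - rr n)) := by
        rw [← hsr]
        have h1 : (1 : ℝ) - s * s ≠ 0 := by rw [hsr]; exact ne_of_gt ha
        field_simp

end ZetaAux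

/-- For the 0–1 sequence `x` with `xₙ = 1` iff `4^k ≤ n < 2·4^k` for some `k ≥ 0`, every
Banach limit of the form `Bx = log 2 · γ(n ↦ (1/n) ∑_{k≥0} x_{k+1} 2^{-k/n})` (with `γ` an
extended limit) satisfies `1/3 ≤ Bx ≤ 2/3`. -/
theorem zeta_banach_limit_zx_between (γ : LInf →L[ℝ] ℝ) (hγ : IsExtendedLimit γ)
    (Z : LInf → LInf)
    (hZ : ∀ (x : LInf) (n : ℕ),
      Z x n = (((n : ℝ) + 1))⁻¹ * ∑' k : ℕ, x k * (2 : ℝ) ^ (-(k : ℝ) / ((n : ℝ) + 1)))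
    (B : LInf →L[ℝ] ℝ) (hB : ∀ x : LInf, B x = Real.log 2 * γ (Z x)) :
    1 / 3 ≤ B zx ∧ B zx ≤ 2 / 3 := by
  have hlog : (0 : ℝ) < Real.log 2 := Real.log_pos (by norm_num)
  have hZf : ∀ n : ℕ, Z zx n
      = ((n : ℝ) + 1)⁻¹ * (ZetaAux.psi (ZetaAux.rr n) / (ZetaAux.rr n * (1 - ZetaAux.rr n))) := by
    intro n
    rw [hZ]
    congr 1
    rw [← ZetaAux.zx_tsum (ZetaAux.rr_pos n) (ZetaAux.rr_lt_one n)]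
    refine tsum_congr fun k => ?_
    congr 1
    simp only [ZetaAux.rr]
    rw [← Real.rpow_natCast ((2 : ℝ) ^ (-(1 : ℝ) / ((n : ℝ) + 1))) k,
      ← Real.rpow_mul (by norm_num : (0 : ℝ) ≤ 2)]
    congr 1
    ring
  constructor
  · rw [hB]
    have hge : 1 / (3 * Real.log 2) ≤ γ (Z zx) :=
      ZetaAux.gamma_ge γ hγ (fun n => by rw [hZf n]; exact ZetaAux.lower_bound n)
    calc (1 : ℝ) / 3 = Real.log 2 * (1 / (3 * Real.log 2)) := by field_simp
      _ ≤ Real.log 2 * γ (Z zx) := mul_le_mul_of_nonneg_left hge hlog.le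
  · rw [hB]
    have hub : ∀ ε > (0 : ℝ), γ (Z zx) ≤ 2 / (3 * Real.log 2) + ε := by
      intro ε hε
      apply ZetaAux.gamma_le γ hγ
      have hβ : Tendsto
          (fun n : ℕ => (2 / 3) / (((n : ℝ) + 1) * Real.sqrt (ZetaAux.rr n) * (1 - ZetaAux.rr n)))
          atTop (nhds ((2 / 3) / Real.log 2)) :=
        (tendsto_const_nhds (x := (2 : ℝ) / 3)).div ZetaAux.rho_tendsto hlog.ne'
      have hlt : (2 : ℝ) / 3 / Real.log 2 < 2 / (3 * Real.log 2) + ε := by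
        rw [show (2 : ℝ) / 3 / Real.log 2 = 2 / (3 * Real.log 2) by
          rw [div_div]]
        linarith
      filter_upwards [hβ.eventually_lt_const hlt] with n hn
      rw [hZf n]
      exact le_trans (ZetaAux.upper_bound n) hn.le
    have hle : γ (Z zx) ≤ 2 / (3 * Real.log 2) := by
      by_contra hc
      push_neg at hc
      have := hub ((γ (Z zx) - 2 / (3 * Real.log 2)) / 2) (by linarith)
      linarith
    calc Real.log 2 * γ (Z zx) ≤ Real.log 2 * (2 / (3 * Real.log 2)) :=
          mul_le_mul_of_nonneg_left hle hlog.le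
      _ = 2 / 3 := by field_simp

end
end

section
/- Let γ : ℓ∞ → ℝ be a continuous linear functional which is multiplicative, i.e. γ(x·y) = γ(x)γ(y) for all x, y ∈ ℓ∞ (pointwise product), with γ(𝟙) = 1 and ‖γ‖_{ℓ∞*} = 1. Then for every Banach limit B one has ‖γ − B‖_{ℓ∞*} = 2. -/
open Filter BoundedContinuousFunction

noncomputable section

lemma mod_succ_iff (k m j : ℕ) (hj : j + 1 < m) : k % m = j ↔ (k + 1) % m = j + 1 := by
  have hm : 0 < m := by omega
  have h2 : 2 ≤ m := by omega
  have h1 : (k + 1) % m = (k % m + 1) % m := by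
    conv_lhs => rw [Nat.add_mod, Nat.mod_eq_of_lt h2]
  have hr : k % m < m := Nat.mod_lt _ hm
  rcases eq_or_ne (k % m) (m - 1) with h | h
  · have hs : k % m + 1 = m := by omega
    have : (k % m + 1) % m = 0 := by rw [hs, Nat.mod_self]
    omega
  · have : (k % m + 1) % m = k % m + 1 := Nat.mod_eq_of_lt (by omega)
    omega

/-- Indicator of the residue class `j` mod `m`. -/
def resInd (m j : ℕ) : LInf :=
  BoundedContinuousFunction.ofNormedAddCommGroup
    (fun n => if n % m = j then (1:ℝ) else 0) continuous_of_discreteTopology 1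
    (by intro n; split <;> norm_num)

@[simp] lemma resInd_apply (m j n : ℕ) :
    resInd m j n = if n % m = j then (1:ℝ) else 0 := rfl

@[simp] lemma shift_apply (x : LInf) (n : ℕ) :
    shift x n = if n = 0 then 0 else x (n - 1) := rfl

lemma resInd_mul_self (m j : ℕ) : resInd m j * resInd m j = resInd m j := by
  ext n
  simp only [BoundedContinuousFunction.coe_mul, Pi.mul_apply, resInd_apply]
  split <;> norm_num

lemma sum_resInd (m : ℕ) (hm : 0 < m) :
    ∑ j ∈ Finset.range m, resInd m j = 1 := by
  ext n
  rw [BoundedContinuousFunction.coe_sum]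
  simp only [Finset.sum_apply, resInd_apply, BoundedContinuousFunction.coe_one, Pi.one_apply]
  rw [Finset.sum_ite_eq]
  simp [Nat.mod_lt n hm]

lemma shift_resInd (m j : ℕ) (hj : j + 1 < m) :
    shift (resInd m j) = resInd m (j + 1) := by
  ext n
  rcases n with _ | k
  · simp only [shift_apply, resInd_apply, Nat.zero_mod]
    rw [if_true]
    split_ifs <;> simp_all
  · simp only [shift_apply, resInd_apply, Nat.add_sub_cancel]
    rw [if_neg (Nat.succ_ne_zero k)]
    by_cases h : k % m = j
    · rw [if_pos h, if_pos ((mod_succ_iff k m j hj).mp h)]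
    · rw [if_neg h, if_neg (fun hc => h ((mod_succ_iff k m j hj).mpr hc))]

/-- Every multiplicative norm-one unital continuous linear functional on `ℓ∞` is at
distance `2` from every Banach limit. -/
theorem dist_multiplicative_functional_banach_limit (γ : LInf →L[ℝ] ℝ)
    (hmul : ∀ x y : LInf, γ (x * y) = γ x * γ y) (hone : γ 1 = 1) (hnorm : ‖γ‖ = 1)
    (B : LInf →L[ℝ] ℝ) (hB : IsBanachLimit B) :
    ‖γ - B‖ = 2 := by
  obtain ⟨hpos, hB1, hshift⟩ := hB
  -- ‖B‖ ≤ 1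
  have hBbound : ∀ x : LInf, |B x| ≤ ‖x‖ := by
    intro x
    have h1 : 0 ≤ B (‖x‖ • (1 : LInf) - x) := by
      apply hpos
      intro n
      simp only [BoundedContinuousFunction.coe_sub, Pi.sub_apply,
        BoundedContinuousFunction.coe_smul, Pi.smul_apply,
        BoundedContinuousFunction.coe_one, Pi.one_apply, smul_eq_mul, mul_one]
      have := x.norm_coe_le_norm n
      have := abs_le.mp (by simpa using this)
      linarith [this.2]
    have h2 : 0 ≤ B (‖x‖ • (1 : LInf) + x) := by
      apply hpos
      intro n
      simp only [BoundedContinuousFunction.coe_add, Pi.add_apply,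
        BoundedContinuousFunction.coe_smul, Pi.smul_apply,
        BoundedContinuousFunction.coe_one, Pi.one_apply, smul_eq_mul, mul_one]
      have := x.norm_coe_le_norm n
      have := abs_le.mp (by simpa using this)
      linarith [this.1]
    rw [map_sub, map_smul, smul_eq_mul, hB1, mul_one] at h1
    rw [map_add, map_smul, smul_eq_mul, hB1, mul_one] at h2
    rw [abs_le]; constructor <;> linarith
  have hBnorm : ‖B‖ ≤ 1 := by
    apply ContinuousLinearMap.opNorm_le_bound _ zero_le_one
    intro x
    rw [one_mul]
    simpa using hBbound x
  have hupper : ‖γ - B‖ ≤ 2 := by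
    calc ‖γ - B‖ ≤ ‖γ‖ + ‖B‖ := by exact norm_sub_le γ B
    _ ≤ 2 := by rw [hnorm]; linarith
  -- lower bound pieces, for each m ≥ 1
  have key : ∀ m : ℕ, 0 < m → 2 - 2 / (m : ℝ) ≤ ‖γ - B‖ := by
    intro m hm
    -- γ of each indicator is 0 or 1
    have hidem : ∀ j, γ (resInd m j) = 0 ∨ γ (resInd m j) = 1 := by
      intro j
      have := hmul (resInd m j) (resInd m j)
      rw [resInd_mul_self] at this
      have h : γ (resInd m j) * (γ (resInd m j) - 1) = 0 := by ring_nf; linarith [this]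
      rcases mul_eq_zero.mp h with h | h
      · exact Or.inl h
      · exact Or.inr (by linarith)
    -- sum of γ of indicators is 1
    have hsumγ : ∑ j ∈ Finset.range m, γ (resInd m j) = 1 := by
      rw [← map_sum, sum_resInd m hm, hone]
    -- exists j₀ with γ (resInd m j₀) = 1
    obtain ⟨j₀, hj₀mem, hj₀⟩ : ∃ j ∈ Finset.range m, γ (resInd m j) ≠ 0 := by
      by_contra h
      push_neg at h
      rw [Finset.sum_eq_zero h] at hsumγ
      norm_num at hsumγ
    have hγj₀ : γ (resInd m j₀) = 1 := (hidem j₀).resolve_left hj₀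
    -- all B (resInd m j) are equal to B (resInd m 0)
    have hBeq : ∀ j, j < m → B (resInd m j) = B (resInd m 0) := by
      intro j
      induction j with
      | zero => intro _; rfl
      | succ k ih =>
        intro hk
        rw [← shift_resInd m k hk, hshift]
        exact ih (by omega)
    -- hence B (resInd m 0) = 1/m
    have hBval : B (resInd m 0) = 1 / (m : ℝ) := by
      have hsum : ∑ j ∈ Finset.range m, B (resInd m j) = 1 := by
        rw [← map_sum, sum_resInd m hm, hB1]
      rw [Finset.sum_congr rfl (fun j hj => hBeq j (Finset.mem_range.mp hj))] at hsum
      rw [Finset.sum_const, Finset.card_range, nsmul_eq_mul] at hsum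
      field_simp
      linarith [hsum]
    -- the test element
    set x : LInf := (2:ℝ) • resInd m j₀ - 1 with hxdef
    have hγx : γ x = 1 := by
      rw [hxdef, map_sub, map_smul, hγj₀, hone, smul_eq_mul]; ring
    have hBx : B x = 2 / (m : ℝ) - 1 := by
      rw [hxdef, map_sub, map_smul, hB1, smul_eq_mul,
        hBeq j₀ (Finset.mem_range.mp hj₀mem), hBval]
      ring
    have hxnorm : ‖x‖ ≤ 1 := by
      apply (BoundedContinuousFunction.norm_le zero_le_one).mpr
      intro n
      simp only [hxdef, BoundedContinuousFunction.coe_sub, Pi.sub_apply,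
        BoundedContinuousFunction.coe_smul, Pi.smul_apply,
        BoundedContinuousFunction.coe_one, Pi.one_apply, resInd_apply, smul_eq_mul]
      split <;> norm_num
    have hval : (γ - B) x = 2 - 2 / (m : ℝ) := by
      rw [ContinuousLinearMap.sub_apply, hγx, hBx]; ring
    calc 2 - 2 / (m : ℝ) = |(γ - B) x| := by
          rw [hval]
          rw [abs_of_nonneg]
          have hm1 : (1:ℝ) ≤ (m : ℝ) := by exact_mod_cast hm
          have : 2 / (m : ℝ) ≤ 2 := by
            rw [div_le_iff₀ (by linarith)]; nlinarith
          linarith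
    _ ≤ ‖γ - B‖ := by simpa using (γ - B).unit_le_opNorm x hxnorm
  -- conclude
  refine le_antisymm hupper ?_
  by_contra h
  push_neg at h
  obtain ⟨m, hm⟩ := exists_nat_gt (2 / (2 - ‖γ - B‖))
  have hm0 : 0 < m := by
    by_contra hm0
    push_neg at hm0
    interval_cases m
    simp at hm
    have : 0 < 2 / (2 - ‖γ - B‖) := div_pos two_pos (by linarith)
    linarith
  have h1 := key m hm0
  have hmpos : (0:ℝ) < m := by exact_mod_cast hm0
  have h2 : 2 / (m:ℝ) < 2 - ‖γ - B‖ := by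
    rw [div_lt_iff₀ hmpos]
    rw [div_lt_iff₀ (by linarith)] at hm
    linarith
  linarith

end
end
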